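/- Let 𝒪 ⊆ ℂ be open, let φ: 𝒪 → ℂ be holomorphic, let C: 𝒪 → ℂ be continuous and nonvanishing, and let ε: (0,∞) × 𝒪 → ℂ satisfy ε(ħ, ·) → 0 as ħ → 0⁺ uniformly on compact subsets of 𝒪. Define J(ħ, x) := (C(x)/(2πħ)) · exp(i·φ(x)/(2πħ)) · (1 + ε(ħ, x)). Suppose a₀(M,q), …, a_d(M,q) are Laurent polynomials in M with coefficients in ℤ[q], and suppose there is ħ₀ > 0 such that for all 0 < ħ < ħ₀ and all x ∈ 𝒪 with x + 2πnħ ∈ 𝒪 for n = 0, …, d, one has Σ_{n=0}^d aₙ(e^{x/2}, e^{πħ}) · J(ħ, x + 2πnħ) = 0. Then for every x ∈ 𝒪: Σ_{n=0}^d aₙ(e^{x/2}, 1) · (exp(i·φ′(x)))ⁿ = 0. -/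

import Mathlib

open Real Filter

/-- The Jones function with semiclassical expansion
`J(ℏ, x) = (C(x)/(2πℏ)) exp(i φ(x)/(2πℏ)) (1 + ε(ℏ, x))`. -/
noncomputable def Jfun (C φ : ℂ → ℂ) (ε : ℝ → ℂ → ℂ) (hb : ℝ) (x : ℂ) : ℂ :=
  (C x / (2 * (π : ℂ) * (hb : ℂ))) *
    Complex.exp (Complex.I * φ x / (2 * (π : ℂ) * (hb : ℂ))) * (1 + ε hb x)

/-- Evaluation of a Laurent polynomial in `M` with coefficients in `ℤ[q]` at
complex numbers `M, q`. -/
noncomputable def laurentEval (p : LaurentPolynomial (Polynomial ℤ)) (M q : ℂ) : ℂ :=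
  p.coeff.sum fun e c => Polynomial.eval q (Polynomial.map (Int.castRingHom ℂ) c) * M ^ e

lemma laurentEval_continuous_q (p : LaurentPolynomial (Polynomial ℤ)) (M : ℂ) :
    Continuous fun q : ℂ => laurentEval p M q := by
  unfold laurentEval
  simp only [Finsupp.sum]
  exact continuous_finset_sum _ fun e _ =>
    ((Polynomial.map (Int.castRingHom ℂ) (p.coeff e)).continuous).mul continuous_const

/-- The analytic core of Theorem 1.13 (AJ): if a `q`-difference operator
`Σₙ aₙ(M̂,q) L̂ⁿ` annihilates a Jones function with semiclassical asymptotics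
governed by `φ`, then `Σₙ aₙ(e^{x/2}, 1) (e^{iφ'(x)})ⁿ = 0` on `𝒪`. -/
theorem stmt_12 (𝒪 : Set ℂ) (h𝒪 : IsOpen 𝒪)
    (φ C : ℂ → ℂ) (hφ : DifferentiableOn ℂ φ 𝒪)
    (hC : ContinuousOn C 𝒪) (hC0 : ∀ x ∈ 𝒪, C x ≠ 0)
    (ε : ℝ → ℂ → ℂ)
    (hε : ∀ K : Set ℂ, K ⊆ 𝒪 → IsCompact K →
      TendstoUniformlyOn (fun hb x => ε hb x) (fun _ => 0)
        (nhdsWithin 0 (Set.Ioi (0 : ℝ))) K)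
    (d : ℕ) (a : Fin (d + 1) → LaurentPolynomial (Polynomial ℤ))
    (hb₀ : ℝ) (hhb₀ : 0 < hb₀)
    (hann : ∀ hb : ℝ, 0 < hb → hb < hb₀ → ∀ x ∈ 𝒪,
      (∀ n : Fin (d + 1), x + 2 * (π : ℂ) * ((n : ℕ) : ℂ) * (hb : ℂ) ∈ 𝒪) →
      ∑ n : Fin (d + 1),
        laurentEval (a n) (Complex.exp (x / 2)) (Complex.exp ((π : ℂ) * (hb : ℂ))) *
          Jfun C φ ε hb (x + 2 * (π : ℂ) * ((n : ℕ) : ℂ) * (hb : ℂ)) = 0) :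
    ∀ x ∈ 𝒪,
      ∑ n : Fin (d + 1),
        laurentEval (a n) (Complex.exp (x / 2)) 1 *
          Complex.exp (Complex.I * deriv φ x) ^ (n : ℕ) = 0 := by
  intro x hx
  classical
  obtain ⟨r₀, hr₀, hball⟩ := Metric.isOpen_iff.mp h𝒪 x hx
  set r : ℝ := r₀ / 2 with hr_def
  have hr : 0 < r := by positivity
  set K : Set ℂ := Metric.closedBall x r with hK_def
  have hKsub : K ⊆ 𝒪 :=
    (Metric.closedBall_subset_ball (by rw [hr_def]; linarith)).trans hball
  have hKcpt : IsCompact K := isCompact_closedBall x r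
  set l : Filter ℝ := nhdsWithin 0 (Set.Ioi (0 : ℝ)) with hl
  haveI : l.NeBot := by rw [hl]; infer_instance
  set δ : ℝ := min hb₀ (r / (2 * π * ((d : ℝ) + 1))) with hδ_def
  have hδpos : 0 < δ := by
    apply lt_min hhb₀
    positivity
  have hIoo : ∀ᶠ t in l, t ∈ Set.Ioo (0 : ℝ) δ :=
    Ioo_mem_nhdsGT_of_mem ⟨le_refl _, hδpos⟩
  -- membership of shifted points in K
  have hmem : ∀ t ∈ Set.Ioo (0 : ℝ) δ, ∀ n : Fin (d + 1),
      x + 2 * (π : ℂ) * ((n : ℕ) : ℂ) * (t : ℂ) ∈ K := by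
    intro t ht n
    rw [hK_def, Metric.mem_closedBall]
    have h1 : dist (x + 2 * (π : ℂ) * ((n : ℕ) : ℂ) * (t : ℂ)) x
        = |2 * π * ((n : ℕ) : ℝ) * t| := by
      rw [Complex.dist_eq]
      rw [show x + 2 * (π : ℂ) * ((n : ℕ) : ℂ) * (t : ℂ) - x
          = ((2 * π * ((n : ℕ) : ℝ) * t : ℝ) : ℂ) by push_cast; ring]
      rw [Complex.norm_real, Real.norm_eq_abs]
    rw [h1, abs_of_nonneg (mul_nonneg (by positivity) ht.1.le)]
    have hn : ((n : ℕ) : ℝ) ≤ (d : ℝ) + 1 := by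
      exact_mod_cast le_of_lt n.isLt
    have hle : t ≤ r / (2 * π * ((d : ℝ) + 1)) := le_trans ht.2.le (min_le_right _ _)
    have h2a : 2 * π * ((n : ℕ) : ℝ) ≤ 2 * π * ((d : ℝ) + 1) := by
      nlinarith [Real.pi_pos]
    have h2 : 2 * π * ((n : ℕ) : ℝ) * t ≤ 2 * π * ((d : ℝ) + 1) * t :=
      mul_le_mul_of_nonneg_right h2a ht.1.le
    have hpos : (0 : ℝ) < 2 * π * ((d : ℝ) + 1) := by positivity
    have h3 : 2 * π * ((d : ℝ) + 1) * t ≤ r := by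
      calc 2 * π * ((d : ℝ) + 1) * t
          ≤ 2 * π * ((d : ℝ) + 1) * (r / (2 * π * ((d : ℝ) + 1))) :=
            mul_le_mul_of_nonneg_left hle hpos.le
        _ = r := by field_simp
    linarith
  -- basic analytic facts at x
  have hφx : HasDerivAt φ (deriv φ x) x :=
    (hφ.differentiableAt (h𝒪.mem_nhds hx)).hasDerivAt
  have hCx : ContinuousAt C x := hC.continuousAt (h𝒪.mem_nhds hx)
  have hπ2 : (2 * (π : ℂ)) ≠ 0 := by
    simp [Complex.ofReal_ne_zero, Real.pi_ne_zero]
  -- the functions whose limit we take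
  set f : Fin (d + 1) → ℝ → ℂ := fun n t =>
    laurentEval (a n) (Complex.exp (x / 2)) (Complex.exp ((π : ℂ) * (t : ℂ))) *
      (C (x + 2 * (π : ℂ) * ((n : ℕ) : ℂ) * (t : ℂ)) *
        Complex.exp (Complex.I * (φ (x + 2 * (π : ℂ) * ((n : ℕ) : ℂ) * (t : ℂ)) - φ x)
          / (2 * (π : ℂ) * (t : ℂ))) *
        (1 + ε t (x + 2 * (π : ℂ) * ((n : ℕ) : ℂ) * (t : ℂ)))) with hf_def
  -- limit of each f n
  have hfn : ∀ n : Fin (d + 1), Tendsto (f n) l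
      (nhds (laurentEval (a n) (Complex.exp (x / 2)) 1 *
        (C x * Complex.exp (Complex.I * (((n : ℕ) : ℂ) * deriv φ x)) * (1 + 0)))) := by
    intro n
    -- the coefficient part
    have hq : Tendsto (fun t : ℝ => Complex.exp ((π : ℂ) * (t : ℂ))) l (nhds 1) := by
      have hcont : Continuous fun t : ℝ => Complex.exp ((π : ℂ) * (t : ℂ)) :=
        Complex.continuous_exp.comp (continuous_const.mul Complex.continuous_ofReal)
      have := (hcont.tendsto 0).mono_left (nhdsWithin_le_nhds (s := Set.Ioi (0 : ℝ)))
      simpa using this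
    have hA : Tendsto
        (fun t : ℝ => laurentEval (a n) (Complex.exp (x / 2))
          (Complex.exp ((π : ℂ) * (t : ℂ)))) l
        (nhds (laurentEval (a n) (Complex.exp (x / 2)) 1)) :=
      ((laurentEval_continuous_q (a n) (Complex.exp (x / 2))).tendsto 1).comp hq
    -- the moving point tends to x
    have hpt : Tendsto (fun t : ℝ => x + 2 * (π : ℂ) * ((n : ℕ) : ℂ) * (t : ℂ)) l (nhds x) := by
      have hcont : Continuous fun t : ℝ => x + 2 * (π : ℂ) * ((n : ℕ) : ℂ) * (t : ℂ) :=
        continuous_const.add (continuous_const.mul Complex.continuous_ofReal)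
      have := (hcont.tendsto 0).mono_left (nhdsWithin_le_nhds (s := Set.Ioi (0 : ℝ)))
      simpa using this
    have hCn : Tendsto (fun t : ℝ => C (x + 2 * (π : ℂ) * ((n : ℕ) : ℂ) * (t : ℂ))) l
        (nhds (C x)) := hCx.tendsto.comp hpt
    -- the epsilon part
    have hεn : Tendsto (fun t : ℝ => ε t (x + 2 * (π : ℂ) * ((n : ℕ) : ℂ) * (t : ℂ))) l
        (nhds 0) := by
      rw [Metric.tendsto_nhds]
      intro δ' hδ'
      have h1 := (Metric.tendstoUniformlyOn_iff.mp (hε K hKsub hKcpt)) δ' hδ'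
      filter_upwards [h1, hIoo] with t h1 h2
      have := h1 _ (hmem t h2 n)
      simpa [dist_comm] using this
    -- the exponential part via the derivative
    have hg : HasDerivAt (fun t : ℝ => x + 2 * (π : ℂ) * ((n : ℕ) : ℂ) * (t : ℂ))
        (2 * (π : ℂ) * ((n : ℕ) : ℂ)) 0 := by
      have h0 : HasDerivAt (fun t : ℝ => (t : ℂ)) 1 0 := by
        simpa using (hasDerivAt_id (0 : ℝ)).ofReal_comp
      simpa using (h0.const_mul (2 * (π : ℂ) * ((n : ℕ) : ℂ))).const_add x
    have hcomp : HasDerivAt (fun t : ℝ => φ (x + 2 * (π : ℂ) * ((n : ℕ) : ℂ) * (t : ℂ)))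
        (deriv φ x * (2 * (π : ℂ) * ((n : ℕ) : ℂ))) 0 := by
      have hφx' : HasDerivAt φ (deriv φ x)
          ((fun t : ℝ => x + 2 * (π : ℂ) * ((n : ℕ) : ℂ) * (t : ℂ)) 0) := by
        simp only [Complex.ofReal_zero, mul_zero, add_zero]; exact hφx
      have := HasDerivAt.comp (𝕜 := ℝ) (𝕜' := ℂ) 0 hφx' hg
      simpa [Function.comp_def] using this
    have hslope : Tendsto
        (fun t : ℝ => ((t : ℂ))⁻¹ *
          (φ (x + 2 * (π : ℂ) * ((n : ℕ) : ℂ) * (t : ℂ)) - φ x)) l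
        (nhds (deriv φ x * (2 * (π : ℂ) * ((n : ℕ) : ℂ)))) := by
      have h1 := hasDerivAt_iff_tendsto_slope.mp hcomp
      have h2 : l ≤ nhdsWithin (0 : ℝ) ({(0 : ℝ)}ᶜ) :=
        nhdsWithin_mono 0 fun y hy => ne_of_gt hy
      refine Tendsto.congr (fun t => ?_) (h1.mono_left h2)
      simp [slope_def_module, Complex.real_smul, Complex.ofReal_inv]
    have hexp : Tendsto
        (fun t : ℝ => Complex.exp (Complex.I *
          (φ (x + 2 * (π : ℂ) * ((n : ℕ) : ℂ) * (t : ℂ)) - φ x)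
          / (2 * (π : ℂ) * (t : ℂ)))) l
        (nhds (Complex.exp (Complex.I * (((n : ℕ) : ℂ) * deriv φ x)))) := by
      have harg : Tendsto
          (fun t : ℝ => Complex.I / (2 * (π : ℂ)) *
            (((t : ℂ))⁻¹ *
              (φ (x + 2 * (π : ℂ) * ((n : ℕ) : ℂ) * (t : ℂ)) - φ x))) l
          (nhds (Complex.I / (2 * (π : ℂ)) *
            (deriv φ x * (2 * (π : ℂ) * ((n : ℕ) : ℂ))))) :=
        hslope.const_mul _
      have hval : Complex.I / (2 * (π : ℂ)) *
          (deriv φ x * (2 * (π : ℂ) * ((n : ℕ) : ℂ)))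
          = Complex.I * (((n : ℕ) : ℂ) * deriv φ x) := by
        field_simp
      have heqfun : ∀ t : ℝ, Complex.I *
          (φ (x + 2 * (π : ℂ) * ((n : ℕ) : ℂ) * (t : ℂ)) - φ x)
          / (2 * (π : ℂ) * (t : ℂ))
          = Complex.I / (2 * (π : ℂ)) *
            (((t : ℂ))⁻¹ *
              (φ (x + 2 * (π : ℂ) * ((n : ℕ) : ℂ) * (t : ℂ)) - φ x)) := by
        intro t
        rw [div_eq_mul_inv, div_eq_mul_inv, mul_inv]
        ring
      have := (Complex.continuous_exp.tendsto _).comp harg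
      rw [hval] at this
      exact Tendsto.congr (fun t => by
        simp only [Function.comp_apply]; rw [heqfun t]) this
    exact hA.mul ((hCn.mul hexp).mul (tendsto_const_nhds.add hεn))
  have hsum : Tendsto (fun t : ℝ => ∑ n : Fin (d + 1), f n t) l
      (nhds (∑ n : Fin (d + 1), laurentEval (a n) (Complex.exp (x / 2)) 1 *
        (C x * Complex.exp (Complex.I * (((n : ℕ) : ℂ) * deriv φ x)) * (1 + 0)))) :=
    tendsto_finset_sum _ fun n _ => hfn n
  -- the sum vanishes eventually
  have heq0 : ∀ᶠ t in l, ∑ n : Fin (d + 1), f n t = 0 := by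
    filter_upwards [hIoo] with t ht
    have htpos : 0 < t := ht.1
    have htlt : t < hb₀ := lt_of_lt_of_le ht.2 (min_le_left _ _)
    have hA := hann t htpos htlt x hx (fun n => hKsub (hmem t ht n))
    have hne : (2 * (π : ℂ) * (t : ℂ)) ≠ 0 := by
      apply mul_ne_zero hπ2
      exact_mod_cast ne_of_gt htpos
    have key : ∑ n : Fin (d + 1), f n t
        = (2 * (π : ℂ) * (t : ℂ) *
            Complex.exp (-(Complex.I * φ x) / (2 * (π : ℂ) * (t : ℂ)))) *
          ∑ n : Fin (d + 1),
            laurentEval (a n) (Complex.exp (x / 2)) (Complex.exp ((π : ℂ) * (t : ℂ))) *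
              Jfun C φ ε t (x + 2 * (π : ℂ) * ((n : ℕ) : ℂ) * (t : ℂ)) := by
      rw [Finset.mul_sum]
      apply Finset.sum_congr rfl
      intro n _
      rw [hf_def]
      simp only [Jfun]
      rw [show Complex.I * (φ (x + 2 * (π : ℂ) * ((n : ℕ) : ℂ) * (t : ℂ)) - φ x)
            / (2 * (π : ℂ) * (t : ℂ))
          = Complex.I * φ (x + 2 * (π : ℂ) * ((n : ℕ) : ℂ) * (t : ℂ))
              / (2 * (π : ℂ) * (t : ℂ))
            + (-(Complex.I * φ x) / (2 * (π : ℂ) * (t : ℂ))) by ring,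
        Complex.exp_add]
      have htc : (t : ℂ) ≠ 0 := by exact_mod_cast ne_of_gt htpos
      field_simp
    rw [key, hA, mul_zero]
  -- conclude by uniqueness of limits
  have hzero : Tendsto (fun t : ℝ => ∑ n : Fin (d + 1), f n t) l (nhds 0) :=
    Tendsto.congr' (heq0.mono fun t h => h.symm) tendsto_const_nhds
  have hL : (∑ n : Fin (d + 1), laurentEval (a n) (Complex.exp (x / 2)) 1 *
      (C x * Complex.exp (Complex.I * (((n : ℕ) : ℂ) * deriv φ x)) * (1 + 0))) = 0 :=
    tendsto_nhds_unique hsum hzero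
  have hfactor : (∑ n : Fin (d + 1), laurentEval (a n) (Complex.exp (x / 2)) 1 *
      (C x * Complex.exp (Complex.I * (((n : ℕ) : ℂ) * deriv φ x)) * (1 + 0)))
      = C x * ∑ n : Fin (d + 1),
          laurentEval (a n) (Complex.exp (x / 2)) 1 *
            Complex.exp (Complex.I * deriv φ x) ^ (n : ℕ) := by
    rw [Finset.mul_sum]
    apply Finset.sum_congr rfl
    intro n _
    rw [show Complex.I * (((n : ℕ) : ℂ) * deriv φ x)
        = ((n : ℕ) : ℂ) * (Complex.I * deriv φ x) by ring,
      Complex.exp_nat_mul]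
    ring
  rw [hfactor] at hL
  exact (mul_eq_zero.mp hL).resolve_left (hC0 x hx)
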